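/- Let $g \ge 3$ and let $G$ be a group containing elements $c_1,\dots,c_{2g+1}$ and $x_1,\dots,x_g$. Set $d_i = c_{i+1} c_i c_{i+1}^{-1}$, $\bar d_i = c_{i+1}^{-1} c_i c_{i+1}$, $e_{i+1} = c_i c_{i+1} c_i^{-1}$, $\bar e_{i+1} = c_i^{-1} c_{i+1} c_i$, and $\varphi = c_{2g+1}^{g+1} c_{2g-1}^{g} \cdots c_5^{3} c_3^{2} c_1$. Assume: (i) $c_1,\dots,c_{2g+1}$ satisfy the braid relations; (ii) the hyperelliptic relation $(c_1 c_2 \cdots c_{2g-1} c_{2g} c_{2g+1}^2 c_{2g} c_{2g-1} \cdots c_2 c_1)^2 = 1$ holds; (iii) the element $c_{2g} c_{2g-1} \cdots c_2 c_1 c_1 c_2 \cdots c_{2g-1} c_{2g}$ commutes with $c_{2g+1}$; (iv) the daisy relation $x_1 x_2 \cdots x_g = c_1 c_3 c_5 \cdots c_{2g-1} \cdot c_{2g+1}^{g-2}$ holds. Then $(\varphi^{-2} \bar e_{2g} \varphi^{2})(\varphi^{-2} \bar e_{2g-2} \varphi^{2}) \cdots (\varphi^{-2} \bar e_4 \varphi^{2})(\varphi^{-2}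 \bar e_2 \varphi^{2}) \cdot (\varphi^{-2} d_{2g} \varphi^{2})(\varphi^{-2} d_{2g-2} \varphi^{2}) \cdots (\varphi^{-2} d_4 \varphi^{2})(\varphi^{-2} d_2 \varphi^{2}) \cdot \bar d_2 \bar d_4 \cdots \bar d_{2g} \cdot e_2 e_4 \cdots e_{2g} \cdot (x_1 x_2 \cdots x_g)^2 \cdot c_{2g+1}^{8} = 1$. -/

import Mathlib

/-- The product `a k * a (k-1) * ⋯ * a m` (descending indices). -/
def prodDesc {G : Type*} [Group G] (a : ℕ → G) (k m : ℕ) : G :=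
  ((List.range (k + 1 - m)).map fun i => a (k - i)).prod

/-- The product `a m * a (m+1) * ⋯ * a k` (ascending indices). -/
def prodAsc {G : Type*} [Group G] (a : ℕ → G) (m k : ℕ) : G :=
  ((List.range (k + 1 - m)).map fun i => a (m + i)).prod

/-- `φ = a (2g+1) ^ (g+1) * a (2g-1) ^ g * ⋯ * a 5 ^ 3 * a 3 ^ 2 * a 1`. -/
def phiOdd {G : Type*} [Group G] (a : ℕ → G) (l : ℕ) : G :=
  ((List.range (l + 1)).map fun j => a (2 * (l - j) + 1) ^ (l - j + 1)).prod

namespace S17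

variable {G : Type*} [Group G]

lemma range_prod_succ (f : ℕ → G) (n : ℕ) :
    ((List.range (n+1)).map f).prod = ((List.range n).map f).prod * f n := by
  rw [List.range_succ, List.map_append, List.prod_append, List.map_singleton,
    List.prod_singleton]

lemma range_prod_succ' (f : ℕ → G) (n : ℕ) :
    ((List.range (n+1)).map f).prod = f 0 * ((List.range n).map (fun j => f (j+1))).prod := by
  rw [List.range_succ_eq_map, List.map_cons, List.prod_cons, List.map_map]
  rfl

lemma commute_prod (a : G) (f : ℕ → G) (n : ℕ) (h : ∀ j, j < n → Commute a (f j)) :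
    Commute a ((List.range n).map f).prod := by
  apply Commute.list_prod_right
  intro x hx
  obtain ⟨j, hj, rfl⟩ := List.mem_map.1 hx
  exact h j (List.mem_range.1 hj)

lemma prod_congr (f f' : ℕ → G) (n : ℕ) (h : ∀ j, j < n → f j = f' j) :
    ((List.range n).map f).prod = ((List.range n).map f').prod := by
  congr 1
  exact List.map_congr_left fun j hj => h j (List.mem_range.1 hj)

lemma conj_prod (a : G) (f : ℕ → G) (n : ℕ) :
    ((List.range n).map fun j => a⁻¹ * f j * a).prod
      = a⁻¹ * ((List.range n).map f).prod * a := by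
  induction n with
  | zero => simp
  | succ n ih =>
      rw [range_prod_succ (fun j => a⁻¹ * f j * a), range_prod_succ f, ih]
      group

lemma prod_one (n : ℕ) : ((List.range n).map fun (_ : ℕ) => (1:G)).prod = 1 := by simp

lemma prod_mul_prod (f f' : ℕ → G) (n : ℕ)
    (h : ∀ i j, i < n → j < n → Commute (f i) (f' j)) :
    ((List.range n).map f).prod * ((List.range n).map f').prod
      = ((List.range n).map fun j => f j * f' j).prod := by
  induction n with
  | zero => simp
  | succ n ih =>
      rw [range_prod_succ f, range_prod_succ f', range_prod_succ (fun j => f j * f' j)]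
      have hc : f n * ((List.range n).map f').prod
          = ((List.range n).map f').prod * f n :=
        (commute_prod (f n) f' n (fun j hj => h n j (Nat.lt_succ_self n) (Nat.lt_succ_of_lt hj))).eq
      calc ((List.range n).map f).prod * f n * (((List.range n).map f').prod * f' n)
          = ((List.range n).map f).prod * (f n * ((List.range n).map f').prod) * f' n := by
            group
        _ = ((List.range n).map f).prod * (((List.range n).map f').prod * f n) * f' n := by
            rw [hc]
        _ = (((List.range n).map f).prod * ((List.range n).map f').prod) * (f n * f' n) := by
            group
        _ = _ := by
            rw [ih (fun i j hi hj => h i j (Nat.lt_succ_of_lt hi) (Nat.lt_succ_of_lt hj))]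

lemma prod_reverse (f : ℕ → G) (n : ℕ)
    (h : ∀ i j, i < n → j < n → Commute (f i) (f j)) :
    ((List.range n).map fun j => f (n - 1 - j)).prod = ((List.range n).map f).prod := by
  induction n with
  | zero => simp
  | succ n ih =>
      rw [range_prod_succ' (fun j => f (n + 1 - 1 - j)), range_prod_succ f]
      have h1 : ((List.range n).map fun j => f (n + 1 - 1 - (j+1))).prod
          = ((List.range n).map fun j => f (n - 1 - j)).prod :=
        prod_congr _ _ _ (fun j _ => by congr 1; omega)
      rw [h1, ih (fun i j hi hj => h i j (Nat.lt_succ_of_lt hi) (Nat.lt_succ_of_lt hj))]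
      have h2 : n + 1 - 1 - 0 = n := by omega
      rw [h2]
      exact (commute_prod (f n) f n (fun j hj => h n j (Nat.lt_succ_self n) (Nat.lt_succ_of_lt hj))).eq

lemma semiconj_prod (a : G) (f f' : ℕ → G) (n : ℕ)
    (h : ∀ j, j < n → a * f j = f' j * a) :
    a * ((List.range n).map f).prod = ((List.range n).map f').prod * a := by
  induction n with
  | zero => simp
  | succ n ih =>
      rw [range_prod_succ f, range_prod_succ f']
      calc a * (((List.range n).map f).prod * f n)
          = (a * ((List.range n).map f).prod) * f n := by group
        _ = (((List.range n).map f').prod * a) * f n := by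
            rw [ih (fun j hj => h j (Nat.lt_succ_of_lt hj))]
        _ = ((List.range n).map f').prod * (a * f n) := by group
        _ = ((List.range n).map f').prod * (f' n * a) := by rw [h n (Nat.lt_succ_self n)]
        _ = _ := by group


def ch (c : ℕ → G) (k : ℕ) : G := ((List.range k).map fun i => c (i+1)).prod
def chR (c : ℕ → G) (k : ℕ) : G := ((List.range k).map fun i => c (k-i)).prod
def Th (c : ℕ → G) (n : ℕ) : G := ((List.range n).map fun j => c (2*j+1)).prod
def dd (c : ℕ → G) (k : ℕ) : G := c (2*k+1) * c (2*k) * (c (2*k+1))⁻¹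
def ddb (c : ℕ → G) (k : ℕ) : G := (c (2*k+1))⁻¹ * c (2*k) * c (2*k+1)
def ee (c : ℕ → G) (k : ℕ) : G := c (2*k-1) * c (2*k) * (c (2*k-1))⁻¹
def eeb (c : ℕ → G) (k : ℕ) : G := (c (2*k-1))⁻¹ * c (2*k) * c (2*k-1)
def Dpr (c : ℕ → G) (h : ℕ) : G := ((List.range h).map fun j => dd c (h-j)).prod
def Dbpr (c : ℕ → G) (h : ℕ) : G := ((List.range h).map fun j => ddb c (j+1)).prod
def Epr (c : ℕ → G) (h : ℕ) : G := ((List.range h).map fun j => ee c (j+1)).prod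
def Ebpr (c : ℕ → G) (h : ℕ) : G := ((List.range h).map fun j => eeb c (h-j)).prod

lemma ch_succ (c : ℕ → G) (k : ℕ) : ch c (k+1) = ch c k * c (k+1) :=
  range_prod_succ _ k

lemma chR_succ (c : ℕ → G) (k : ℕ) : chR c (k+1) = c (k+1) * chR c k := by
  show ((List.range (k+1)).map fun i => c (k+1-i)).prod = _
  rw [range_prod_succ' (fun i => c (k+1-i)), Nat.sub_zero]
  congr 1
  exact prod_congr _ _ _ (fun j _ => by congr 1; omega)

lemma Th_succ (c : ℕ → G) (n : ℕ) : Th c (n+1) = Th c n * c (2*n+1) :=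
  range_prod_succ _ n

lemma Dpr_succ (c : ℕ → G) (h : ℕ) : Dpr c (h+1) = dd c (h+1) * Dpr c h := by
  show ((List.range (h+1)).map fun j => dd c (h+1-j)).prod = _
  rw [range_prod_succ' (fun j => dd c (h+1-j)), Nat.sub_zero]
  congr 1
  exact prod_congr _ _ _ (fun j _ => by congr 1; omega)

lemma Ebpr_succ (c : ℕ → G) (h : ℕ) : Ebpr c (h+1) = eeb c (h+1) * Ebpr c h := by
  show ((List.range (h+1)).map fun j => eeb c (h+1-j)).prod = _
  rw [range_prod_succ' (fun j => eeb c (h+1-j)), Nat.sub_zero]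
  congr 1
  exact prod_congr _ _ _ (fun j _ => by congr 1; omega)

lemma Dbpr_succ (c : ℕ → G) (h : ℕ) : Dbpr c (h+1) = Dbpr c h * ddb c (h+1) :=
  range_prod_succ _ h

lemma Epr_succ (c : ℕ → G) (h : ℕ) : Epr c (h+1) = Epr c h * ee c (h+1) :=
  range_prod_succ _ h

section WithHyps

variable (c : ℕ → G) (g : ℕ)
variable (hbraid : ∀ i, 1 ≤ i → i + 1 ≤ 2 * g + 1 →
      c i * c (i + 1) * c i = c (i + 1) * c i * c (i + 1))
variable (hcomm : ∀ i j, 1 ≤ i → j ≤ 2 * g + 1 → i + 2 ≤ j → c i * c j = c j * c i)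

include hcomm in
lemma comm_c_ch (a k : ℕ) (hk : k + 2 ≤ a) (ha : a ≤ 2*g+1) :
    Commute (c a) (ch c k) :=
  commute_prod _ _ _ (fun j hj =>
    ((hcomm (j+1) a (by omega) ha (by omega) : Commute (c (j+1)) (c a))).symm)

include hcomm in
lemma comm_c_chR (a k : ℕ) (hk : k + 2 ≤ a) (ha : a ≤ 2*g+1) :
    Commute (c a) (chR c k) :=
  commute_prod _ _ _ (fun j hj =>
    ((hcomm (k-j) a (by omega) ha (by omega) : Commute (c (k-j)) (c a))).symm)

include hcomm in
lemma comm_c_Th (a n : ℕ) (hn : 2*n+1 ≤ a) (ha : a ≤ 2*g+1) :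
    Commute (c a) (Th c n) :=
  commute_prod _ _ _ (fun j hj =>
    ((hcomm (2*j+1) a (by omega) ha (by omega) : Commute (c (2*j+1)) (c a))).symm)

include hcomm in
lemma comm_c_Dpr (a h : ℕ) (hh : 2*h+3 ≤ a) (ha : a ≤ 2*g+1) :
    Commute (c a) (Dpr c h) :=
  commute_prod _ _ _ (fun j hj => by
    have h1 : Commute (c a) (c (2*(h-j)+1)) :=
      ((hcomm (2*(h-j)+1) a (by omega) ha (by omega) : Commute (c (2*(h-j)+1)) (c a))).symm
    have h2 : Commute (c a) (c (2*(h-j))) :=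
      ((hcomm (2*(h-j)) a (by omega) ha (by omega) : Commute (c (2*(h-j))) (c a))).symm
    exact (h1.mul_right h2).mul_right h1.inv_right)

include hcomm in
lemma comm_c_Dbpr (a h : ℕ) (hh : 2*h+3 ≤ a) (ha : a ≤ 2*g+1) :
    Commute (c a) (Dbpr c h) :=
  commute_prod _ _ _ (fun j hj => by
    have h1 : Commute (c a) (c (2*(j+1)+1)) :=
      ((hcomm (2*(j+1)+1) a (by omega) ha (by omega) : Commute (c (2*(j+1)+1)) (c a))).symm
    have h2 : Commute (c a) (c (2*(j+1))) :=
      ((hcomm (2*(j+1)) a (by omega) ha (by omega) : Commute (c (2*(j+1))) (c a))).symm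
    exact (h1.inv_right.mul_right h2).mul_right h1)

include hcomm in
lemma comm_c_Epr (a h : ℕ) (hh : 2*h+2 ≤ a) (ha : a ≤ 2*g+1) :
    Commute (c a) (Epr c h) :=
  commute_prod _ _ _ (fun j hj => by
    have e1 : 2*(j+1)-1 = 2*j+1 := by omega
    have h1 : Commute (c a) (c (2*(j+1)-1)) := by
      rw [e1]
      exact ((hcomm (2*j+1) a (by omega) ha (by omega) : Commute (c (2*j+1)) (c a))).symm
    have h2 : Commute (c a) (c (2*(j+1))) :=
      ((hcomm (2*(j+1)) a (by omega) ha (by omega) : Commute (c (2*(j+1))) (c a))).symm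
    exact (h1.mul_right h2).mul_right h1.inv_right)

include hcomm in
lemma comm_c_Ebpr (a h : ℕ) (hh : 2*h+2 ≤ a) (ha : a ≤ 2*g+1) :
    Commute (c a) (Ebpr c h) :=
  commute_prod _ _ _ (fun j hj => by
    have e1 : 2*(h-j)-1 = 2*(h-j)-1 := rfl
    have h1 : Commute (c a) (c (2*(h-j)-1)) :=
      ((hcomm (2*(h-j)-1) a (by omega) ha (by omega) : Commute (c (2*(h-j)-1)) (c a))).symm
    have h2 : Commute (c a) (c (2*(h-j))) :=
      ((hcomm (2*(h-j)) a (by omega) ha (by omega) : Commute (c (2*(h-j))) (c a))).symm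
    exact (h1.inv_right.mul_right h2).mul_right h1)

include hbraid hcomm in
lemma asc_conj : ∀ k, k ≤ 2*g+1 → ∀ i, 1 ≤ i → i + 1 ≤ k →
    ch c k * c i = c (i+1) * ch c k := by
  intro k
  induction k with
  | zero => intro _ i _ hik; exact absurd hik (by omega)
  | succ k ih =>
      intro hk i hi1 hik
      rcases Nat.lt_or_ge (i+1) (k+1) with hlt | hge
      · have hcm : Commute (c i) (c (k+1)) :=
          hcomm i (k+1) hi1 (by omega) (by omega)
        rw [ch_succ]
        calc ch c k * c (k+1) * c i
            = ch c k * (c i * c (k+1)) := by rw [mul_assoc, ← hcm.eq]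
          _ = (ch c k * c i) * c (k+1) := by group
          _ = (c (i+1) * ch c k) * c (k+1) := by rw [ih (by omega) i hi1 (by omega)]
          _ = c (i+1) * (ch c k * c (k+1)) := by group
      · obtain ⟨m, rfl⟩ : ∃ m, i = m + 1 := ⟨i-1, by omega⟩
        obtain rfl : k = m + 1 := by omega
        have hb := hbraid (m+1) (by omega) (by omega)
        have hcm : Commute (c (m+1+1)) (ch c m) :=
          comm_c_ch c g hcomm (m+1+1) m (by omega) (by omega)
        rw [ch_succ, ch_succ]
        calc ch c m * c (m+1) * c (m+1+1) * c (m+1)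
            = ch c m * (c (m+1) * c (m+1+1) * c (m+1)) := by group
          _ = ch c m * (c (m+1+1) * c (m+1) * c (m+1+1)) := by rw [hb]
          _ = (ch c m * c (m+1+1)) * (c (m+1) * c (m+1+1)) := by group
          _ = (c (m+1+1) * ch c m) * (c (m+1) * c (m+1+1)) := by rw [← hcm.eq]
          _ = c (m+1+1) * (ch c m * c (m+1) * c (m+1+1)) := by group

include hbraid hcomm in
lemma desc_conj : ∀ k, k ≤ 2*g+1 → ∀ i, i + 2 ≤ k →
    chR c k * c (i+2) = c (i+1) * chR c k := by
  intro k
  induction k with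
  | zero => intro _ i hik; exact absurd hik (by omega)
  | succ k ih =>
      intro hk i hik
      rcases Nat.lt_or_ge (i+2) (k+1) with hlt | hge
      · have hcm : Commute (c (i+1)) (c (k+1)) :=
          hcomm (i+1) (k+1) (by omega) (by omega) (by omega)
        rw [chR_succ]
        calc c (k+1) * chR c k * c (i+2)
            = c (k+1) * (chR c k * c (i+2)) := by group
          _ = c (k+1) * (c (i+1) * chR c k) := by rw [ih (by omega) i (by omega)]
          _ = (c (i+1) * c (k+1)) * chR c k := by rw [← mul_assoc, ← hcm.eq]
          _ = c (i+1) * (c (k+1) * chR c k) := by group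
      · obtain rfl : k = i + 1 := by omega
        have hb := hbraid (i+1) (by omega) (by omega)
        have hcm : Commute (c (i+1+1)) (chR c i) :=
          comm_c_chR c g hcomm (i+1+1) i (by omega) (by omega)
        rw [chR_succ, chR_succ]
        calc c (i+1+1) * (c (i+1) * chR c i) * c (i+2)
            = c (i+1+1) * c (i+1) * (chR c i * c (i+2)) := by group
          _ = c (i+1+1) * c (i+1) * (c (i+2) * chR c i) := by
              rw [show (i+2) = i+1+1 from rfl, ← hcm.eq]
          _ = (c (i+1) * c (i+1+1) * c (i+1)) * chR c i := by
              rw [show c (i+1+1) * c (i+1) * (c (i+2) * chR c i)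
                    = (c (i+1+1) * c (i+1) * c (i+1+1)) * chR c i from by group, ← hb]
          _ = c (i+1) * (c (i+1+1) * (c (i+1) * chR c i)) := by group


include hcomm in
lemma factL : ∀ h, h ≤ g → chR c (2*h+1) = Dpr c h * Th c (h+1) := by
  intro h
  induction h with
  | zero =>
      intro _
      show chR c 1 = Dpr c 0 * Th c 1
      simp [chR, Dpr, Th, List.range_succ]
  | succ h ih =>
      intro hh
      have ihh := ih (by omega)
      have s1 : chR c (2*(h+1)+1) = c (2*h+3) * (c (2*h+2) * chR c (2*h+1)) := by
        have t1 : 2*(h+1)+1 = (2*h+2)+1 := by omega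
        rw [t1, chR_succ]
        have t2 : (2*h+2 : ℕ) = (2*h+1)+1 := by omega
        rw [t2, chR_succ]
      have s2 : Dpr c (h+1) * Th c (h+1+1)
          = (c (2*h+3) * c (2*h+2) * (c (2*h+3))⁻¹ * Dpr c h) * (Th c (h+1) * c (2*h+3)) := by
        rw [Dpr_succ, Th_succ]
        have t1 : 2*(h+1)+1 = 2*h+3 := by omega
        have t2 : 2*(h+1) = 2*h+2 := by omega
        rw [dd, t1, t2]
      rw [s1, ihh, s2]
      have hK : c (2*h+3) * (Dpr c h * Th c (h+1)) = (Dpr c h * Th c (h+1)) * c (2*h+3) :=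
        ((comm_c_Dpr c g hcomm (2*h+3) h (by omega) (by omega)).mul_right
          (comm_c_Th c g hcomm (2*h+3) (h+1) (by omega) (by omega))).eq
      calc c (2*h+3) * (c (2*h+2) * (Dpr c h * Th c (h+1)))
          = (c (2*h+3) * c (2*h+2) * (c (2*h+3))⁻¹) * (c (2*h+3) * (Dpr c h * Th c (h+1))) := by
            group
        _ = (c (2*h+3) * c (2*h+2) * (c (2*h+3))⁻¹) * ((Dpr c h * Th c (h+1)) * c (2*h+3)) := by
            rw [hK]
        _ = (c (2*h+3) * c (2*h+2) * (c (2*h+3))⁻¹ * Dpr c h) * (Th c (h+1) * c (2*h+3)) := by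
            group

include hcomm in
lemma factEb : ∀ h, h ≤ g → chR c (2*h+1) = Th c (h+1) * Ebpr c h := by
  intro h
  induction h with
  | zero =>
      intro _
      show chR c 1 = Th c 1 * Ebpr c 0
      simp [chR, Ebpr, Th, List.range_succ]
  | succ h ih =>
      intro hh
      have ihh := ih (by omega)
      have s1 : chR c (2*(h+1)+1) = c (2*h+3) * (c (2*h+2) * chR c (2*h+1)) := by
        have t1 : 2*(h+1)+1 = (2*h+2)+1 := by omega
        rw [t1, chR_succ]
        have t2 : (2*h+2 : ℕ) = (2*h+1)+1 := by omega
        rw [t2, chR_succ]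
      have s2 : Th c (h+1+1) * Ebpr c (h+1)
          = ((Th c h * c (2*h+1)) * c (2*h+3))
            * (((c (2*h+1))⁻¹ * c (2*h+2) * c (2*h+1)) * Ebpr c h) := by
        rw [Ebpr_succ, Th_succ, Th_succ]
        have t1 : 2*(h+1)+1 = 2*h+3 := by omega
        have t2 : 2*(h+1)-1 = 2*h+1 := by omega
        have t3 : 2*(h+1) = 2*h+2 := by omega
        rw [eeb, t1, t2, t3]
      rw [s1, ihh, Th_succ, s2]
      have haT : Commute (c (2*h+3)) (Th c h) :=
        comm_c_Th c g hcomm (2*h+3) h (by omega) (by omega)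
      have hbT : Commute (c (2*h+2)) (Th c h) :=
        comm_c_Th c g hcomm (2*h+2) h (by omega) (by omega)
      have hau : Commute (c (2*h+3)) (c (2*h+1)) :=
        ((hcomm (2*h+1) (2*h+3) (by omega) (by omega) (by omega)
          : Commute (c (2*h+1)) (c (2*h+3)))).symm
      calc c (2*h+3) * (c (2*h+2) * (Th c h * c (2*h+1) * Ebpr c h))
          = (c (2*h+3) * (c (2*h+2) * Th c h)) * (c (2*h+1) * Ebpr c h) := by group
        _ = (c (2*h+3) * (Th c h * c (2*h+2))) * (c (2*h+1) * Ebpr c h) := by rw [hbT.eq]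
        _ = ((c (2*h+3) * Th c h) * c (2*h+2)) * (c (2*h+1) * Ebpr c h) := by group
        _ = ((Th c h * c (2*h+3)) * c (2*h+2)) * (c (2*h+1) * Ebpr c h) := by rw [haT.eq]
        _ = Th c h * ((c (2*h+3) * c (2*h+1)) * ((c (2*h+1))⁻¹ * c (2*h+2) * c (2*h+1) * Ebpr c h)) := by
            group
        _ = Th c h * ((c (2*h+1) * c (2*h+3)) * ((c (2*h+1))⁻¹ * c (2*h+2) * c (2*h+1) * Ebpr c h)) := by
            rw [hau.eq]
        _ = ((Th c h * c (2*h+1)) * c (2*h+3))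
            * (((c (2*h+1))⁻¹ * c (2*h+2) * c (2*h+1)) * Ebpr c h) := by group

include hcomm in
lemma factR : ∀ h, h ≤ g → ch c (2*h+1) = Th c (h+1) * Dbpr c h := by
  intro h
  induction h with
  | zero =>
      intro _
      show ch c 1 = Th c 1 * Dbpr c 0
      simp [ch, Dbpr, Th, List.range_succ]
  | succ h ih =>
      intro hh
      have ihh := ih (by omega)
      have s1 : ch c (2*(h+1)+1) = (ch c (2*h+1) * c (2*h+2)) * c (2*h+3) := by
        have t1 : 2*(h+1)+1 = (2*h+2)+1 := by omega
        rw [t1, ch_succ]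
        have t2 : (2*h+2 : ℕ) = (2*h+1)+1 := by omega
        rw [t2, ch_succ]
      have s2 : Th c (h+1+1) * Dbpr c (h+1)
          = (Th c (h+1) * c (2*h+3)) * (Dbpr c h * ((c (2*h+3))⁻¹ * c (2*h+2) * c (2*h+3))) := by
        rw [Dbpr_succ, Th_succ]
        have t1 : 2*(h+1)+1 = 2*h+3 := by omega
        have t2 : 2*(h+1) = 2*h+2 := by omega
        rw [ddb, t1, t2]
      rw [s1, ihh, s2]
      have hDb : Commute (c (2*h+3)) (Dbpr c h) :=
        comm_c_Dbpr c g hcomm (2*h+3) h (by omega) (by omega)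
      calc ((Th c (h+1) * Dbpr c h) * c (2*h+2)) * c (2*h+3)
          = Th c (h+1) * ((Dbpr c h * c (2*h+3)) * ((c (2*h+3))⁻¹ * (c (2*h+2) * c (2*h+3)))) := by
            group
        _ = Th c (h+1) * ((c (2*h+3) * Dbpr c h) * ((c (2*h+3))⁻¹ * (c (2*h+2) * c (2*h+3)))) := by
            rw [← hDb.eq]
        _ = (Th c (h+1) * c (2*h+3)) * (Dbpr c h * ((c (2*h+3))⁻¹ * c (2*h+2) * c (2*h+3))) := by
            group

include hcomm in
lemma factE : ∀ h, h ≤ g → ch c (2*h+1) = Epr c h * Th c (h+1) := by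
  intro h
  induction h with
  | zero =>
      intro _
      show ch c 1 = Epr c 0 * Th c 1
      simp [ch, Epr, Th, List.range_succ]
  | succ h ih =>
      intro hh
      have ihh := ih (by omega)
      have s1 : ch c (2*(h+1)+1) = (ch c (2*h+1) * c (2*h+2)) * c (2*h+3) := by
        have t1 : 2*(h+1)+1 = (2*h+2)+1 := by omega
        rw [t1, ch_succ]
        have t2 : (2*h+2 : ℕ) = (2*h+1)+1 := by omega
        rw [t2, ch_succ]
      have s2 : Epr c (h+1) * Th c (h+1+1)
          = (Epr c h * (c (2*h+1) * c (2*h+2) * (c (2*h+1))⁻¹)) * ((Th c h * c (2*h+1)) * c (2*h+3)) := by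
        rw [Epr_succ, Th_succ, Th_succ]
        have t1 : 2*(h+1)+1 = 2*h+3 := by omega
        have t2 : 2*(h+1)-1 = 2*h+1 := by omega
        have t3 : 2*(h+1) = 2*h+2 := by omega
        rw [ee, t1, t2, t3]
      rw [s1, ihh, Th_succ, s2]
      have hbT : Commute (c (2*h+2)) (Th c h) :=
        comm_c_Th c g hcomm (2*h+2) h (by omega) (by omega)
      have huT : Commute (c (2*h+1)) (Th c h) :=
        comm_c_Th c g hcomm (2*h+1) h (by omega) (by omega)
      calc ((Epr c h * (Th c h * c (2*h+1))) * c (2*h+2)) * c (2*h+3)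
          = Epr c h * ((Th c h * c (2*h+1)) * (c (2*h+2) * c (2*h+3))) := by group
        _ = Epr c h * ((c (2*h+1) * Th c h) * (c (2*h+2) * c (2*h+3))) := by rw [huT.eq]
        _ = (Epr c h * c (2*h+1)) * ((Th c h * c (2*h+2)) * c (2*h+3)) := by group
        _ = (Epr c h * c (2*h+1)) * ((c (2*h+2) * Th c h) * c (2*h+3)) := by rw [← hbT.eq]
        _ = (Epr c h * (c (2*h+1) * c (2*h+2) * (c (2*h+1))⁻¹)) * ((c (2*h+1) * Th c h) * c (2*h+3)) := by
            group
        _ = (Epr c h * (c (2*h+1) * c (2*h+2) * (c (2*h+1))⁻¹)) * ((Th c h * c (2*h+1)) * c (2*h+3)) := by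
            rw [huT.eq]


def Ofun (c : ℕ → G) (g : ℕ) (e : ℕ → ℕ) : G :=
  ((List.range (g+1)).map fun j => c (2*j+1) ^ e j).prod

include hcomm in
lemma odd_comm (i j : ℕ) (hi : i ≤ g) (hj : j ≤ g) :
    Commute (c (2*i+1)) (c (2*j+1)) := by
  rcases lt_trichotomy i j with h | h | h
  · exact (hcomm (2*i+1) (2*j+1) (by omega) (by omega) (by omega)
      : Commute (c (2*i+1)) (c (2*j+1)))
  · rw [h]
  · exact ((hcomm (2*j+1) (2*i+1) (by omega) (by omega) (by omega)
      : Commute (c (2*j+1)) (c (2*i+1)))).symm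

include hcomm in
lemma Omul (e1 e2 : ℕ → ℕ) :
    Ofun c g e1 * Ofun c g e2 = Ofun c g (fun j => e1 j + e2 j) := by
  unfold Ofun
  rw [prod_mul_prod _ _ _ (fun i j hi hj =>
    (odd_comm c g hcomm i j (by omega) (by omega)).pow_pow _ _)]
  exact prod_congr _ _ _ (fun j _ => (pow_add _ _ _).symm)

lemma Ocongr (e1 e2 : ℕ → ℕ) (h : ∀ j, j ≤ g → e1 j = e2 j) :
    Ofun c g e1 = Ofun c g e2 :=
  prod_congr _ _ _ (fun j hj => by rw [h j (by omega)])

lemma Th_eq_O : Th c (g+1) = Ofun c g (fun _ => 1) :=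
  prod_congr _ _ _ (fun j _ => (pow_one _).symm)

lemma Thg_eq_O : Th c g = Ofun c g (fun j => if j = g then 0 else 1) := by
  unfold Ofun
  rw [range_prod_succ (fun j => c (2*j+1) ^ (if j = g then 0 else 1)), if_pos rfl,
    pow_zero, mul_one]
  exact prod_congr _ _ _ (fun j hj => by rw [if_neg (by omega), pow_one])

lemma cpow_eq_O (k : ℕ) : (c (2*g+1))^k = Ofun c g (fun j => if j = g then k else 0) := by
  unfold Ofun
  rw [range_prod_succ (fun j => c (2*j+1) ^ (if j = g then k else 0)), if_pos rfl]
  have h1 : ((List.range g).map fun j => c (2*j+1) ^ (if j = g then k else 0)).prod = 1 := by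
    rw [prod_congr (fun j => c (2*j+1) ^ (if j = g then k else 0)) (fun _ => (1:G)) g
      (fun j hj => by
        show c (2*j+1) ^ (if j = g then k else 0) = 1
        rw [if_neg (by omega : ¬ j = g), pow_zero])]
    exact prod_one g
  rw [h1, one_mul]

lemma nu_eq_O : ((List.range g).map fun j => (c (2*j+1))^(2*j+2)).prod
    = Ofun c g (fun j => if j = g then 0 else 2*j+2) := by
  unfold Ofun
  rw [range_prod_succ (fun j => c (2*j+1) ^ (if j = g then 0 else 2*j+2)), if_pos rfl,
    pow_zero, mul_one]
  exact prod_congr _ _ _ (fun j hj => by rw [if_neg (by omega)])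

lemma mu_eq_O : ((List.range g).map fun j => (c (2*j+3))^(2*j+2)).prod
    = Ofun c g (fun j => 2*j) := by
  unfold Ofun
  rw [range_prod_succ' (fun j => c (2*j+1) ^ (2*j))]
  have h0 : c (2*0+1) ^ (2*0) = 1 := by norm_num
  rw [h0, one_mul]
  exact (prod_congr _ _ _ (fun j _ => by
    have e1 : 2*(j+1)+1 = 2*j+3 := by omega
    have e2 : 2*(j+1) = 2*j+2 := by omega
    rw [e1, e2])).symm

include hcomm in
lemma phi_eq_O : phiOdd c g = Ofun c g (fun j => j+1) := by
  have hrev := prod_reverse (fun j => c (2*j+1) ^ (j+1)) (g+1)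
    (fun i j hi hj => (odd_comm c g hcomm i j (by omega) (by omega)).pow_pow _ _)
  have hl : phiOdd c g = ((List.range (g+1)).map fun j => c (2*((g+1)-1-j)+1) ^ (((g+1)-1-j)+1)).prod := by
    unfold phiOdd
    exact prod_congr _ _ _ (fun j _ => by
      have e1 : (g+1)-1-j = g-j := by omega
      rw [e1])
  rw [hl, hrev]
  rfl

lemma assembly (eb dp db ep l r th mu nu qq p s t : G)
    (h1 : th * eb = l) (h2 : dp * th = l) (h3 : th * db = r) (h4 : ep * th = r)
    (h5 : (l*l)*(r*r) = 1) (h6 : (r*r)*nu = mu*(r*r)) (h7 : qq = th*(mu*th))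
    (h8 : nu*(p*s*(p*s)*t) = th*(th*qq)) (h9 : th*nu = nu*th) :
    (qq⁻¹ * eb * qq) * (qq⁻¹ * dp * qq) * db * ep * (p*s)^2 * t = 1 := by
  have e1 : eb = th⁻¹ * l := by rw [← h1]; group
  have e2 : dp = l * th⁻¹ := by rw [← h2]; group
  have e3 : db = th⁻¹ * r := by rw [← h3]; group
  have e4 : ep = r * th⁻¹ := by rw [← h4]; group
  have h9' : nu * th⁻¹ = th⁻¹ * nu := by
    have : Commute th nu := h9
    exact (this.inv_left.eq).symm
  rw [e1, e2, e3, e4, pow_two]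
  have hmu : th⁻¹ * (qq * th⁻¹) = mu := by rw [h7]; group
  calc (qq⁻¹ * (th⁻¹ * l) * qq) * (qq⁻¹ * (l * th⁻¹) * qq) * (th⁻¹ * r) * (r * th⁻¹)
        * (p*s*(p*s)) * t
      = qq⁻¹ * th⁻¹ * ((l * l) * ((th⁻¹ * (qq * th⁻¹)) * ((r * r)
          * (th⁻¹ * (p*s*(p*s)*t))))) := by group
    _ = qq⁻¹ * th⁻¹ * ((l * l) * (mu * ((r * r) * (th⁻¹ * (p*s*(p*s)*t))))) := by rw [hmu]
    _ = qq⁻¹ * th⁻¹ * ((l * l) * ((mu * (r * r)) * (th⁻¹ * (p*s*(p*s)*t)))) := by group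
    _ = qq⁻¹ * th⁻¹ * ((l * l) * (((r * r) * nu) * (th⁻¹ * (p*s*(p*s)*t)))) := by rw [h6]
    _ = qq⁻¹ * th⁻¹ * (((l*l) * (r*r)) * ((nu * th⁻¹) * (p*s*(p*s)*t))) := by group
    _ = qq⁻¹ * th⁻¹ * ((nu * th⁻¹) * (p*s*(p*s)*t)) := by rw [h5]; group
    _ = qq⁻¹ * th⁻¹ * ((th⁻¹ * nu) * (p*s*(p*s)*t)) := by rw [h9']
    _ = qq⁻¹ * (th⁻¹ * (th⁻¹ * (nu * (p*s*(p*s)*t)))) := by group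
    _ = qq⁻¹ * (th⁻¹ * (th⁻¹ * (th * (th * qq)))) := by rw [h8]
    _ = 1 := by group

lemma prodAsc_eq (k : ℕ) : prodAsc c 1 k = ch c k := by
  unfold prodAsc ch
  rw [Nat.add_sub_cancel]
  exact prod_congr _ _ _ (fun j _ => by rw [Nat.add_comm])

lemma prodDesc_eq (k : ℕ) : prodDesc c k 1 = chR c k := by
  unfold prodDesc chR
  rw [Nat.add_sub_cancel]

end WithHyps

end S17

/-- the positive relator `H(g,2)` of Theorem 5.2: with
`d i = c (i+1) * c i * (c (i+1))⁻¹`, `d̄ i = (c (i+1))⁻¹ * c i * c (i+1)`,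
`e (i+1) = c i * c (i+1) * (c i)⁻¹`, `ē (i+1) = (c i)⁻¹ * c (i+1) * c i`, and
`φ = c (2g+1)^{g+1} c (2g-1)^{g} ⋯ c 3 ^ 2 c 1`, assuming the braid relations,
the hyperelliptic relation, centrality, and the daisy relation, one has
`(φ⁻² ē (2g) φ²) ⋯ (φ⁻² ē 2 φ²) · (φ⁻² d (2g) φ²) ⋯ (φ⁻² d 2 φ²) ·
d̄ 2 ⋯ d̄ (2g) · e 2 ⋯ e (2g) · (x 1 ⋯ x g)² · c (2g+1)^8 = 1`. -/
theorem statement17 {G : Type*} [Group G] (g : ℕ) (hg : 3 ≤ g) (c x : ℕ → G)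
    (hbraid : ∀ i, 1 ≤ i → i + 1 ≤ 2 * g + 1 →
      c i * c (i + 1) * c i = c (i + 1) * c i * c (i + 1))
    (hcomm : ∀ i j, 1 ≤ i → j ≤ 2 * g + 1 → i + 2 ≤ j → c i * c j = c j * c i)
    (hhyper : (prodAsc c 1 (2 * g) * (c (2 * g + 1)) ^ 2 * prodDesc c (2 * g) 1) ^ 2 = 1)
    (hcentral : Commute (prodDesc c (2 * g) 1 * prodAsc c 1 (2 * g)) (c (2 * g + 1)))
    (hdaisy : ((List.range g).map fun j => x (j + 1)).prod =
      ((List.range g).map fun j => c (2 * j + 1)).prod * (c (2 * g + 1)) ^ (g - 2)) :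
    (((List.range g).map fun j =>
        ((phiOdd c g) ^ 2)⁻¹ *
          ((c (2 * g - 2 * j - 1))⁻¹ * c (2 * g - 2 * j) * c (2 * g - 2 * j - 1)) *
          (phiOdd c g) ^ 2).prod) *
      (((List.range g).map fun j =>
        ((phiOdd c g) ^ 2)⁻¹ *
          (c (2 * g - 2 * j + 1) * c (2 * g - 2 * j) * (c (2 * g - 2 * j + 1))⁻¹) *
          (phiOdd c g) ^ 2).prod) *
      (((List.range g).map fun j =>
        (c (2 * j + 3))⁻¹ * c (2 * j + 2) * c (2 * j + 3)).prod) *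
      (((List.range g).map fun j =>
        c (2 * j + 1) * c (2 * j + 2) * (c (2 * j + 1))⁻¹).prod) *
      (((List.range g).map fun j => x (j + 1)).prod) ^ 2 *
      (c (2 * g + 1)) ^ 8 = 1 := by
  have hfactEb := S17.factEb c g hcomm g le_rfl
  have hfactL := S17.factL c g hcomm g le_rfl
  have hfactR := S17.factR c g hcomm g le_rfl
  have hfactE := S17.factE c g hcomm g le_rfl
  -- the hyperelliptic element W = R * L and W^2 = 1
  have hRL_eq : S17.ch c (2*g+1) * S17.chR c (2*g+1)
      = prodAsc c 1 (2*g) * (c (2*g+1))^2 * prodDesc c (2*g) 1 := by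
    rw [S17.prodAsc_eq, S17.prodDesc_eq, S17.ch_succ, S17.chR_succ, pow_two]
    group
  have hW : (S17.ch c (2*g+1) * S17.chR c (2*g+1))
      * (S17.ch c (2*g+1) * S17.chR c (2*g+1)) = 1 := by
    rw [hRL_eq, ← pow_two]
    exact hhyper
  -- centrality: L*R commutes with the top twist
  have hZ : Commute (S17.chR c (2*g) * S17.ch c (2*g)) (c (2*g+1)) := by
    rw [← S17.prodAsc_eq, ← S17.prodDesc_eq]
    exact hcentral
  have hLReq : S17.chR c (2*g+1) * S17.ch c (2*g+1)
      = c (2*g+1) * ((S17.chR c (2*g) * S17.ch c (2*g)) * c (2*g+1)) := by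
    rw [S17.chR_succ, S17.ch_succ]
    group
  have hLRtop : (S17.chR c (2*g+1) * S17.ch c (2*g+1)) * c (2*g+1)
      = c (2*g+1) * (S17.chR c (2*g+1) * S17.ch c (2*g+1)) := by
    rw [hLReq]
    calc c (2*g+1) * ((S17.chR c (2*g) * S17.ch c (2*g)) * c (2*g+1)) * c (2*g+1)
        = c (2*g+1) * (((S17.chR c (2*g) * S17.ch c (2*g)) * c (2*g+1)) * c (2*g+1)) := by
          group
      _ = c (2*g+1) * ((c (2*g+1) * (S17.chR c (2*g) * S17.ch c (2*g))) * c (2*g+1)) := by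
          rw [hZ.eq]
      _ = c (2*g+1) * (c (2*g+1) * ((S17.chR c (2*g) * S17.ch c (2*g)) * c (2*g+1))) := by
          group
  -- L*R commutes with all generators, hence with R
  have hLRc : ∀ i, 1 ≤ i → i ≤ 2*g →
      (S17.chR c (2*g+1) * S17.ch c (2*g+1)) * c i
        = c i * (S17.chR c (2*g+1) * S17.ch c (2*g+1)) := by
    intro i hi1 hi2
    obtain ⟨m, rfl⟩ : ∃ m, i = m + 1 := ⟨i-1, by omega⟩
    have hA := S17.asc_conj c g hbraid hcomm (2*g+1) le_rfl (m+1) (by omega) (by omega)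
    have hB := S17.desc_conj c g hbraid hcomm (2*g+1) le_rfl m (by omega)
    calc (S17.chR c (2*g+1) * S17.ch c (2*g+1)) * c (m+1)
        = S17.chR c (2*g+1) * (S17.ch c (2*g+1) * c (m+1)) := by group
      _ = S17.chR c (2*g+1) * (c (m+1+1) * S17.ch c (2*g+1)) := by rw [hA]
      _ = S17.chR c (2*g+1) * (c (m+2) * S17.ch c (2*g+1)) := by
          rw [show c (m+1+1) = c (m+2) from rfl]
      _ = (S17.chR c (2*g+1) * c (m+2)) * S17.ch c (2*g+1) := by group
      _ = (c (m+1) * S17.chR c (2*g+1)) * S17.ch c (2*g+1) := by rw [hB]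
      _ = c (m+1) * (S17.chR c (2*g+1) * S17.ch c (2*g+1)) := by group
  have hLRall : ∀ j, j < 2*g+1 →
      Commute (S17.chR c (2*g+1) * S17.ch c (2*g+1)) (c (j+1)) := by
    intro j hj
    rcases Nat.lt_or_ge (j+1) (2*g+1) with h | h
    · exact hLRc (j+1) (by omega) (by omega)
    · have e : j+1 = 2*g+1 := by omega
      rw [e]
      exact hLRtop
  have hLR_R : Commute (S17.chR c (2*g+1) * S17.ch c (2*g+1)) (S17.ch c (2*g+1)) :=
    S17.commute_prod _ _ _ hLRall
  have hRL : S17.ch c (2*g+1) * S17.chR c (2*g+1)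
      = S17.chR c (2*g+1) * S17.ch c (2*g+1) := by
    have h2 : (S17.chR c (2*g+1) * S17.ch c (2*g+1)) * S17.ch c (2*g+1)
        = (S17.ch c (2*g+1) * S17.chR c (2*g+1)) * S17.ch c (2*g+1) := by
      rw [hLR_R.eq]
      group
    exact (mul_right_cancel h2).symm
  have hL2R2 : (S17.chR c (2*g+1) * S17.chR c (2*g+1))
      * (S17.ch c (2*g+1) * S17.ch c (2*g+1)) = 1 := by
    calc (S17.chR c (2*g+1) * S17.chR c (2*g+1)) * (S17.ch c (2*g+1) * S17.ch c (2*g+1))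
        = S17.chR c (2*g+1) * (S17.chR c (2*g+1) * S17.ch c (2*g+1)) * S17.ch c (2*g+1) := by
          group
      _ = S17.chR c (2*g+1) * (S17.ch c (2*g+1) * S17.chR c (2*g+1)) * S17.ch c (2*g+1) := by
          rw [← hRL]
      _ = (S17.chR c (2*g+1) * S17.ch c (2*g+1)) * (S17.chR c (2*g+1) * S17.ch c (2*g+1)) := by
          group
      _ = (S17.ch c (2*g+1) * S17.chR c (2*g+1)) * (S17.ch c (2*g+1) * S17.chR c (2*g+1)) := by
          rw [← hRL]
      _ = 1 := hW
  -- shifting the odd multitwist by R^2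
  have hstep : ∀ j, j < g →
      (S17.ch c (2*g+1) * S17.ch c (2*g+1)) * (c (2*j+1))^(2*j+2)
        = (c (2*j+3))^(2*j+2) * (S17.ch c (2*g+1) * S17.ch c (2*g+1)) := by
    intro j hj
    have s1 : SemiconjBy (S17.ch c (2*g+1)) (c (2*j+1)) (c (2*j+2)) := by
      have h := S17.asc_conj c g hbraid hcomm (2*g+1) le_rfl (2*j+1) (by omega) (by omega)
      rwa [show (2*j+1+1 : ℕ) = 2*j+2 from by omega] at h
    have s2 : SemiconjBy (S17.ch c (2*g+1)) (c (2*j+2)) (c (2*j+3)) := by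
      have h := S17.asc_conj c g hbraid hcomm (2*g+1) le_rfl (2*j+2) (by omega) (by omega)
      rwa [show (2*j+2+1 : ℕ) = 2*j+3 from by omega] at h
    exact ((s2.mul_left s1).pow_right (2*j+2))
  have h6 : (S17.ch c (2*g+1) * S17.ch c (2*g+1))
        * ((List.range g).map fun j => (c (2*j+1))^(2*j+2)).prod
      = ((List.range g).map fun j => (c (2*j+3))^(2*j+2)).prod
        * (S17.ch c (2*g+1) * S17.ch c (2*g+1)) :=
    S17.semiconj_prod _ _ _ g hstep
  -- abelian computations among odd twists
  have hq : (phiOdd c g)^2 = S17.Ofun c g (fun j => 2*j+2) := by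
    rw [pow_two, S17.phi_eq_O c g hcomm, S17.Omul c g hcomm]
    exact S17.Ocongr c g _ _ (fun j hj => by omega)
  have h7 : (phiOdd c g)^2 = S17.Th c (g+1)
      * (((List.range g).map fun j => (c (2*j+3))^(2*j+2)).prod * S17.Th c (g+1)) := by
    rw [S17.Th_eq_O, S17.mu_eq_O, S17.Omul c g hcomm, S17.Omul c g hcomm, hq]
    exact S17.Ocongr c g _ _ (fun j hj => by omega)
  have h9 : S17.Th c (g+1) * ((List.range g).map fun j => (c (2*j+1))^(2*j+2)).prod
      = ((List.range g).map fun j => (c (2*j+1))^(2*j+2)).prod * S17.Th c (g+1) := by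
    rw [S17.Th_eq_O, S17.nu_eq_O, S17.Omul c g hcomm, S17.Omul c g hcomm]
    exact S17.Ocongr c g _ _ (fun j hj => Nat.add_comm _ _)
  have h8 : ((List.range g).map fun j => (c (2*j+1))^(2*j+2)).prod
        * (S17.Th c g * (c (2*g+1))^(g-2) * (S17.Th c g * (c (2*g+1))^(g-2)) * (c (2*g+1))^8)
      = S17.Th c (g+1) * (S17.Th c (g+1) * (phiOdd c g)^2) := by
    rw [S17.nu_eq_O, S17.Thg_eq_O, S17.cpow_eq_O c g (g-2), S17.cpow_eq_O c g 8,
      S17.Th_eq_O, hq]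
    simp only [S17.Omul c g hcomm]
    exact S17.Ocongr c g _ _ (fun j hj => by
      split_ifs with h <;> omega)
  -- rewrite the goal
  have e1 : (((List.range g).map fun j =>
        ((phiOdd c g) ^ 2)⁻¹ *
          ((c (2 * g - 2 * j - 1))⁻¹ * c (2 * g - 2 * j) * c (2 * g - 2 * j - 1)) *
          (phiOdd c g) ^ 2).prod)
      = ((phiOdd c g)^2)⁻¹ * (((List.range g).map fun j =>
          (c (2 * g - 2 * j - 1))⁻¹ * c (2 * g - 2 * j) * c (2 * g - 2 * j - 1)).prod)
        * (phiOdd c g)^2 :=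
    S17.conj_prod _ _ _
  have e2 : (((List.range g).map fun j =>
        ((phiOdd c g) ^ 2)⁻¹ *
          (c (2 * g - 2 * j + 1) * c (2 * g - 2 * j) * (c (2 * g - 2 * j + 1))⁻¹) *
          (phiOdd c g) ^ 2).prod)
      = ((phiOdd c g)^2)⁻¹ * (((List.range g).map fun j =>
          c (2 * g - 2 * j + 1) * c (2 * g - 2 * j) * (c (2 * g - 2 * j + 1))⁻¹).prod)
        * (phiOdd c g)^2 :=
    S17.conj_prod _ _ _
  have e1' : ((List.range g).map fun j =>
        (c (2 * g - 2 * j - 1))⁻¹ * c (2 * g - 2 * j) * c (2 * g - 2 * j - 1)).prod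
      = S17.Ebpr c g :=
    S17.prod_congr _ _ _ (fun j hj => by
      show (c (2 * g - 2 * j - 1))⁻¹ * c (2 * g - 2 * j) * c (2 * g - 2 * j - 1)
          = S17.eeb c (g-j)
      rw [S17.eeb, show 2*(g-j)-1 = 2*g-2*j-1 from by omega,
        show 2*(g-j) = 2*g-2*j from by omega])
  have e2' : ((List.range g).map fun j =>
        c (2 * g - 2 * j + 1) * c (2 * g - 2 * j) * (c (2 * g - 2 * j + 1))⁻¹).prod
      = S17.Dpr c g :=
    S17.prod_congr _ _ _ (fun j hj => by
      show c (2 * g - 2 * j + 1) * c (2 * g - 2 * j) * (c (2 * g - 2 * j + 1))⁻¹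
          = S17.dd c (g-j)
      rw [S17.dd, show 2*(g-j)+1 = 2*g-2*j+1 from by omega,
        show 2*(g-j) = 2*g-2*j from by omega])
  have e3' : ((List.range g).map fun j =>
        (c (2 * j + 3))⁻¹ * c (2 * j + 2) * c (2 * j + 3)).prod
      = S17.Dbpr c g :=
    S17.prod_congr _ _ _ (fun j hj => by
      show (c (2 * j + 3))⁻¹ * c (2 * j + 2) * c (2 * j + 3) = S17.ddb c (j+1)
      rw [S17.ddb, show 2*(j+1)+1 = 2*j+3 from by omega,
        show 2*(j+1) = 2*j+2 from by omega])
  have e4' : ((List.range g).map fun j =>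
        c (2 * j + 1) * c (2 * j + 2) * (c (2 * j + 1))⁻¹).prod
      = S17.Epr c g :=
    S17.prod_congr _ _ _ (fun j hj => by
      show c (2 * j + 1) * c (2 * j + 2) * (c (2 * j + 1))⁻¹ = S17.ee c (j+1)
      rw [S17.ee, show 2*(j+1)-1 = 2*j+1 from by omega,
        show 2*(j+1) = 2*j+2 from by omega])
  rw [hdaisy, e1, e2, e1', e2', e3', e4',
    show ((List.range g).map fun j => c (2*j+1)).prod = S17.Th c g from rfl]
  exact S17.assembly (S17.Ebpr c g) (S17.Dpr c g) (S17.Dbpr c g) (S17.Epr c g)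
    (S17.chR c (2*g+1)) (S17.ch c (2*g+1)) (S17.Th c (g+1))
    (((List.range g).map fun j => (c (2*j+3))^(2*j+2)).prod)
    (((List.range g).map fun j => (c (2*j+1))^(2*j+2)).prod)
    ((phiOdd c g)^2) (S17.Th c g) ((c (2*g+1))^(g-2)) ((c (2*g+1))^8)
    hfactEb.symm hfactL.symm hfactR.symm hfactE.symm hL2R2 h6 h7 h8 h9
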